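/- Let 𝔫 be the sextuple of even characteristics complementary to the standard syzygetic quadruple, namely the six pairs (a,b) ∈ ({0,1}²)²: ((1,0),(0,0)), ((1,0),(0,1)), ((0,1),(0,0)), ((0,1),(1,0)), ((1,1),(0,0)), ((1,1),(1,1)), and let T(Z) = ∏_{(a,b)∈𝔫} θ[a,b](Z) for Z ∈ ℍ₂. Then for Z = [[z₀,z₁],[z₁,z₂]] ∈ ℍ₂ one has T([[z₀,−z₁],[−z₁,z₂]]) = −T([[z₀,z₁],[z₁,z₂]]). -/

import Mathlib

open Matrix Complex

/-- The Siegel upper half space of genus 2: symmetric complex 2×2 matrices with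
positive definite imaginary part. -/
def SiegelH2 : Set (Matrix (Fin 2) (Fin 2) ℂ) :=
  {Z | Z.IsSymm ∧ (Matrix.of fun i j => (Z i j).im).PosDef}

/-- The summand of the theta series with characteristic `(a,b)`:
`exp(πi((g+a/2)ᵀ Z (g+a/2) + bᵀ(g+a/2)))`. -/
noncomputable def thetaTerm (a b : Fin 2 → ℤ) (Z : Matrix (Fin 2) (Fin 2) ℂ)
    (g : Fin 2 → ℤ) : ℂ :=
  Complex.exp (Real.pi * Complex.I *
    ((∑ i, ∑ j, ((g i : ℂ) + (a i : ℂ) / 2) * Z i j * ((g j : ℂ) + (a j : ℂ) / 2)) +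
      ∑ i, (b i : ℂ) * ((g i : ℂ) + (a i : ℂ) / 2)))

/-- The theta constant `θ[a,b](Z) = Σ_{g∈ℤ²} exp(πi((g+a/2)ᵀ Z (g+a/2) + bᵀ(g+a/2)))`. -/
noncomputable def theta (a b : Fin 2 → ℤ) (Z : Matrix (Fin 2) (Fin 2) ℂ) : ℂ :=
  ∑' g : Fin 2 → ℤ, thetaTerm a b Z g

/-- The product `T = T_𝔫` of the six theta constants whose characteristics form the
sextuple complementary to the standard syzygetic quadruple. -/
noncomputable def Tform (Z : Matrix (Fin 2) (Fin 2) ℂ) : ℂ :=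
  theta ![1, 0] ![0, 0] Z * theta ![1, 0] ![0, 1] Z *
  theta ![0, 1] ![0, 0] Z * theta ![0, 1] ![1, 0] Z *
  theta ![1, 1] ![0, 0] Z * theta ![1, 1] ![1, 1] Z

/-- Reindexing of `ℤ²` used to compare theta series: `g ↦ (g₀, −g₁−a₁)`. -/
def negSecond (a : Fin 2 → ℤ) : Equiv.Perm (Fin 2 → ℤ) :=
  Function.Involutive.toPerm (fun g => ![g 0, -g 1 - a 1]) (by
    intro g
    funext i
    fin_cases i <;> simp <;> ring)

lemma thetaTerm_negSecond (a b : Fin 2 → ℤ) (Z : Matrix (Fin 2) (Fin 2) ℂ)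
    (g : Fin 2 → ℤ) :
    thetaTerm a b !![Z 0 0, -Z 0 1; -Z 1 0, Z 1 1] (negSecond a g) =
      Complex.exp (-(Real.pi * Complex.I * (a 1 : ℂ) * (b 1 : ℂ))) * thetaTerm a b Z g := by
  have h00 : (!![Z 0 0, -Z 0 1; -Z 1 0, Z 1 1]) 0 0 = Z 0 0 := rfl
  have h01 : (!![Z 0 0, -Z 0 1; -Z 1 0, Z 1 1]) 0 1 = -Z 0 1 := rfl
  have h10 : (!![Z 0 0, -Z 0 1; -Z 1 0, Z 1 1]) 1 0 = -Z 1 0 := rfl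
  have h11 : (!![Z 0 0, -Z 0 1; -Z 1 0, Z 1 1]) 1 1 = Z 1 1 := rfl
  unfold thetaTerm
  rw [show negSecond a g = ![g 0, -g 1 - a 1] from rfl]
  rw [← Complex.exp_add]
  simp only [Function.Involutive.coe_toPerm, Fin.sum_univ_two, Matrix.cons_val_zero,
    Matrix.cons_val_one, Matrix.head_cons, h00, h01, h10, h11]
  have : (Real.pi : ℂ) * Complex.I *
      ((((g 0 : ℂ) + (a 0 : ℂ) / 2) * (Z 0 0) * ((g 0 : ℂ) + (a 0 : ℂ) / 2) +
          ((g 0 : ℂ) + (a 0 : ℂ) / 2) * (-Z 0 1) * (((-g 1 - a 1 : ℤ) : ℂ) + (a 1 : ℂ) / 2) +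
        ((((-g 1 - a 1 : ℤ) : ℂ) + (a 1 : ℂ) / 2) * (-Z 1 0) * ((g 0 : ℂ) + (a 0 : ℂ) / 2) +
          (((-g 1 - a 1 : ℤ) : ℂ) + (a 1 : ℂ) / 2) * (Z 1 1) *
            (((-g 1 - a 1 : ℤ) : ℂ) + (a 1 : ℂ) / 2))) +
        ((b 0 : ℂ) * ((g 0 : ℂ) + (a 0 : ℂ) / 2) +
          (b 1 : ℂ) * (((-g 1 - a 1 : ℤ) : ℂ) + (a 1 : ℂ) / 2))) =
      (-(Real.pi * Complex.I * (a 1 : ℂ) * (b 1 : ℂ)) +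
        (Real.pi : ℂ) * Complex.I *
          ((((g 0 : ℂ) + (a 0 : ℂ) / 2) * Z 0 0 * ((g 0 : ℂ) + (a 0 : ℂ) / 2) +
              ((g 0 : ℂ) + (a 0 : ℂ) / 2) * Z 0 1 * ((g 1 : ℂ) + (a 1 : ℂ) / 2) +
            (((g 1 : ℂ) + (a 1 : ℂ) / 2) * Z 1 0 * ((g 0 : ℂ) + (a 0 : ℂ) / 2) +
              ((g 1 : ℂ) + (a 1 : ℂ) / 2) * Z 1 1 * ((g 1 : ℂ) + (a 1 : ℂ) / 2))) +
            ((b 0 : ℂ) * ((g 0 : ℂ) + (a 0 : ℂ) / 2) +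
              (b 1 : ℂ) * ((g 1 : ℂ) + (a 1 : ℂ) / 2)))) +
        ((-(b 1 * g 1) : ℤ) : ℂ) * (2 * Real.pi * Complex.I) := by
    push_cast
    ring
  rw [this, Complex.exp_add, Complex.exp_int_mul_two_pi_mul_I, mul_one]

lemma theta_negSecond (a b : Fin 2 → ℤ) (Z : Matrix (Fin 2) (Fin 2) ℂ) :
    theta a b !![Z 0 0, -Z 0 1; -Z 1 0, Z 1 1] =
      Complex.exp (-(Real.pi * Complex.I * (a 1 : ℂ) * (b 1 : ℂ))) * theta a b Z := by
  unfold theta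
  rw [← Equiv.tsum_eq (negSecond a) (thetaTerm a b !![Z 0 0, -Z 0 1; -Z 1 0, Z 1 1]),
    ← tsum_mul_left]
  exact tsum_congr fun g => thetaTerm_negSecond a b Z g

/-- Under the substitution `z₁ ↦ −z₁` the cusp form `T` changes its sign:
`T([[z₀,−z₁],[−z₁,z₂]]) = −T([[z₀,z₁],[z₁,z₂]])` for `Z ∈ ℍ₂`. -/
theorem stmt_9 (Z : Matrix (Fin 2) (Fin 2) ℂ) (hZ : Z ∈ SiegelH2) :
    Tform !![Z 0 0, -Z 0 1; -Z 1 0, Z 1 1] = -Tform Z := by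
  unfold Tform
  rw [theta_negSecond, theta_negSecond, theta_negSecond, theta_negSecond,
    theta_negSecond, theta_negSecond]
  simp only [Matrix.cons_val_one, Matrix.head_cons, Matrix.cons_val_zero, Int.cast_zero, Int.cast_one]
  have e0 : ∀ x : ℂ, Complex.exp (-((Real.pi : ℂ) * Complex.I * 0 * x)) = 1 := fun x => by
    norm_num
  have e0' : ∀ x : ℂ, Complex.exp (-((Real.pi : ℂ) * Complex.I * x * 0)) = 1 := fun x => by
    norm_num
  have e1 : Complex.exp (-((Real.pi : ℂ) * Complex.I * 1 * 1)) = -1 := by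
    rw [show -((Real.pi : ℂ) * Complex.I * 1 * 1) = -((Real.pi : ℂ) * Complex.I) by ring,
      Complex.exp_neg, Complex.exp_pi_mul_I]
    norm_num
  simp only [e0, e0', e1]
  ring
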